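/- arXiv:0801.1195 — 2 statements merged into one kernel-verified Lean document; each statement's English description precedes it below -/
import Mathlib

section
/- Let x = (x_∞, x₂, x₃) ∈ F and let d ∈ {0,1} be the 0-th 2-adic digit of x₂, i.e., x₂ − d ∈ 2ℤ₂. Then the point u = ((x_∞ + d)/2, (x₂ + d)/2, (x₃ + d)/2) lies in F and (1/2)·x − u ∈ Γ; that is, u is the unique representative in F of (1/2)x modulo Γ (the explicit formula for α^{(−1,0)}, multiplication by 1/2, on X = G/Γ ≅ F). -/
open Set

noncomputable section

/-- The ambient group `G = ℝ × ℚ₂ × ℚ₃`. -/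
abbrev G : Type := ℝ × ℚ_[2] × ℚ_[3]

/-- The diagonal embedding of `ℚ` into `G`. -/
def Δ (r : ℚ) : G := ((r : ℝ), (r : ℚ_[2]), (r : ℚ_[3]))

/-- `ℤ[1/6]`, the rationals expressible with denominator `6^k`. -/
def zInv6 : Set ℚ := {q | ∃ (z : ℤ) (k : ℕ), q = z / 6 ^ k}

/-- `Γ = Δ(ℤ[1/6])`. -/
def Γ : Set G := Δ '' zInv6

/-- The fundamental domain `F = [0,1) × ℤ₂ × ℤ₃`. -/
def F : Set G := {x | x.1 ∈ Set.Ico (0 : ℝ) 1 ∧ ‖x.2.1‖ ≤ 1 ∧ ‖x.2.2‖ ≤ 1}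

/-- Coordinatewise multiplication by a rational on `G`. -/
def act (q : ℚ) (x : G) : G :=
  ((q : ℝ) * x.1, (q : ℚ_[2]) * x.2.1, (q : ℚ_[3]) * x.2.2)

lemma norm_three_q2 : ‖(3 : ℚ_[2])‖ = 1 := by
  have hlt := Padic.norm_intCast_lt_one_iff (p := 2) (k := 3)
  have hle := Padic.norm_int_le_one (p := 2) 3
  have : ((3:ℤ) : ℚ_[2]) = (3 : ℚ_[2]) := by norm_cast
  rw [this] at hlt hle
  rcases lt_or_eq_of_le hle with h | h
  · rw [hlt] at h; omega
  · exact h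

lemma norm_two_q3 : ‖(2 : ℚ_[3])‖ = 1 := by
  have hlt := Padic.norm_intCast_lt_one_iff (p := 3) (k := 2)
  have hle := Padic.norm_int_le_one (p := 3) 2
  have : ((2:ℤ) : ℚ_[3]) = (2 : ℚ_[3]) := by norm_cast
  rw [this] at hlt hle
  rcases lt_or_eq_of_le hle with h | h
  · rw [hlt] at h; omega
  · exact h

lemma norm_six_q2 : ‖(6 : ℚ_[2])‖ = (2:ℝ)⁻¹ := by
  have : (6 : ℚ_[2]) = (2 : ℚ_[2]) * (3 : ℚ_[2]) := by norm_num
  have hp : ‖(2 : ℚ_[2])‖ = (2:ℝ)⁻¹ := by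
    rw [show (2:ℚ_[2]) = ((2:ℕ):ℚ_[2]) by norm_num, Padic.norm_p]; norm_num
  rw [this, norm_mul, norm_three_q2, hp, mul_one]

lemma norm_six_q3 : ‖(6 : ℚ_[3])‖ = (3:ℝ)⁻¹ := by
  have : (6 : ℚ_[3]) = (3 : ℚ_[3]) * (2 : ℚ_[3]) := by norm_num
  have hp : ‖(3 : ℚ_[3])‖ = (3:ℝ)⁻¹ := by
    rw [show (3:ℚ_[3]) = ((3:ℕ):ℚ_[3]) by norm_num, Padic.norm_p]; norm_num
  rw [this, norm_mul, norm_two_q3, hp, mul_one]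

/-- A rational with denominator a power of 6 and `p`-adic norm `≤ 1` for `p = 2, 3`
is an integer. -/
lemma zInv6_int (q : ℚ) (hq : q ∈ zInv6) (h2 : ‖(q : ℚ_[2])‖ ≤ 1)
    (h3 : ‖(q : ℚ_[3])‖ ≤ 1) : ∃ n : ℤ, q = n := by
  obtain ⟨z, k, rfl⟩ := hq
  have hz2 : ((2:ℤ) ^ k) ∣ z := by
    have key := (Padic.norm_int_le_pow_iff_dvd (p := 2) z k).mp ?_
    · exact_mod_cast key
    have hzz : ((z : ℚ_[2])) = ((z / 6 ^ k : ℚ) : ℚ_[2]) * ((6:ℚ_[2]) ^ k) := by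
      push_cast
      field_simp
    rw [hzz, norm_mul, norm_pow, norm_six_q2]
    calc ‖((z / 6 ^ k : ℚ) : ℚ_[2])‖ * ((2:ℝ))⁻¹ ^ k ≤ 1 * ((2:ℝ))⁻¹ ^ k := by
          apply mul_le_mul_of_nonneg_right h2; positivity
      _ = ((2:ℕ) : ℝ) ^ (-(k:ℤ)) := by
          rw [one_mul, zpow_neg, zpow_natCast, ← inv_pow]; norm_num
  have hz3 : ((3:ℤ) ^ k) ∣ z := by
    have key := (Padic.norm_int_le_pow_iff_dvd (p := 3) z k).mp ?_
    · exact_mod_cast key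
    have hzz : ((z : ℚ_[3])) = ((z / 6 ^ k : ℚ) : ℚ_[3]) * ((6:ℚ_[3]) ^ k) := by
      push_cast
      field_simp
    rw [hzz, norm_mul, norm_pow, norm_six_q3]
    calc ‖((z / 6 ^ k : ℚ) : ℚ_[3])‖ * ((3:ℝ))⁻¹ ^ k ≤ 1 * ((3:ℝ))⁻¹ ^ k := by
          apply mul_le_mul_of_nonneg_right h3; positivity
      _ = ((3:ℕ) : ℝ) ^ (-(k:ℤ)) := by
          rw [one_mul, zpow_neg, zpow_natCast, ← inv_pow]; norm_num
  have hcop : IsCoprime ((2:ℤ) ^ k) ((3:ℤ) ^ k) := by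
    apply IsCoprime.pow
    exact Int.isCoprime_iff_gcd_eq_one.mpr (by norm_num)
  obtain ⟨m, hm⟩ := hcop.mul_dvd hz2 hz3
  refine ⟨m, ?_⟩
  have h6 : ((6:ℚ) ^ k) ≠ 0 := by positivity
  rw [div_eq_iff h6]
  rw [show ((6:ℚ))^k = (2:ℚ)^k * 3^k by rw [← mul_pow]; norm_num]
  push_cast [hm]
  ring

/-- The explicit formula for `α^{(-1,0)}` (multiplication by `1/2`) on `X = G/Γ ≅ F`:
if `d ∈ {0,1}` is the `0`-th `2`-adic digit of `x₂` (i.e. `x₂ - d ∈ 2ℤ₂`), then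
`u = ((x_∞+d)/2, (x₂+d)/2, (x₃+d)/2)` lies in `F` and is the unique representative
of `(1/2)x` modulo `Γ`. -/
theorem times_half_formula (x : G) (hx : x ∈ F) (d : ℤ) (hd : d = 0 ∨ d = 1)
    (hdig : ∃ z : ℚ_[2], ‖z‖ ≤ 1 ∧ x.2.1 - (d : ℚ_[2]) = 2 * z) :
    ∀ u : G,
      u = ((x.1 + (d : ℝ)) / 2, (x.2.1 + (d : ℚ_[2])) / 2,
           (x.2.2 + (d : ℚ_[3])) / 2) →
      u ∈ F ∧ act (1/2) x - u ∈ Γ ∧ ∀ v ∈ F, act (1/2) x - v ∈ Γ → v = u := by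
  intro u hu
  obtain ⟨hx1, hx2, hx3⟩ := hx
  obtain ⟨z, hz, hzeq⟩ := hdig
  -- u ∈ F
  have hdR : (0:ℝ) ≤ d ∧ (d:ℝ) ≤ 1 := by
    rcases hd with h | h <;> subst h <;> norm_num
  have huF : u ∈ F := by
    refine ⟨⟨?_, ?_⟩, ?_, ?_⟩
    · rw [hu]; dsimp only
      have := hx1.1
      linarith [hdR.1]
    · rw [hu]; dsimp only
      have := hx1.2
      linarith [hdR.2]
    · rw [hu]; dsimp only
      have h2 : (x.2.1 + (d : ℚ_[2])) / 2 = z + (d : ℚ_[2]) := by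
        have h2ne : (2 : ℚ_[2]) ≠ 0 := by norm_num
        field_simp
        linear_combination hzeq
      rw [h2]
      calc ‖z + (d : ℚ_[2])‖ ≤ max ‖z‖ ‖(d : ℚ_[2])‖ := Padic.nonarchimedean _ _
        _ ≤ 1 := max_le hz (Padic.norm_int_le_one d)
    · rw [hu]; dsimp only
      rw [div_eq_mul_inv, norm_mul, norm_inv, norm_two_q3, inv_one, mul_one]
      calc ‖x.2.2 + (d : ℚ_[3])‖ ≤ max ‖x.2.2‖ ‖(d : ℚ_[3])‖ := Padic.nonarchimedean _ _
        _ ≤ 1 := max_le hx3 (Padic.norm_int_le_one d)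
  -- the difference is Δ(-d/2)
  have hq0 : (-(d:ℚ)/2) ∈ zInv6 := by
    refine ⟨-3 * d, 1, by push_cast; ring⟩
  have hdiff : act (1/2) x - u = Δ (-(d:ℚ)/2) := by
    rw [hu]
    simp only [act, Δ, Prod.ext_iff, Prod.fst_sub, Prod.snd_sub]
    refine ⟨?_, ?_, ?_⟩ <;> push_cast <;> ring
  refine ⟨huF, ⟨_, hq0, hdiff.symm⟩, ?_⟩
  -- uniqueness
  intro v hvF hvΓ
  obtain ⟨q1, hq1, hq1eq⟩ := hvΓ
  -- v - u = Δ (q1 - q0) where q0 = -d/2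
  set q : ℚ := -(d:ℚ)/2 - q1 with hqdef
  have hqmem : q ∈ zInv6 := by
    obtain ⟨z1, k1, rfl⟩ := hq1
    refine ⟨-3 * d * 6 ^ k1 - 6 * z1, k1 + 1, ?_⟩
    have h6 : ((6:ℚ) ^ k1) ≠ 0 := by positivity
    rw [hqdef]
    field_simp
    push_cast
    ring
  have hvu : v - u = Δ q := by
    have : v - u = (act (1/2) x - u) - (act (1/2) x - v) := by abel
    rw [this, hdiff, ← hq1eq]
    simp only [Δ, Prod.ext_iff, Prod.fst_sub, Prod.snd_sub, hqdef]
    refine ⟨?_, ?_, ?_⟩ <;> push_cast <;> ring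
  have hvu1 : (q : ℝ) = v.1 - u.1 := by rw [← Prod.fst_sub, hvu]; rfl
  have hvu2 : (q : ℚ_[2]) = v.2.1 - u.2.1 := by
    rw [← Prod.fst_sub, ← Prod.snd_sub, hvu]; rfl
  have hvu3 : (q : ℚ_[3]) = v.2.2 - u.2.2 := by
    rw [← Prod.snd_sub, ← Prod.snd_sub, hvu]; rfl
  obtain ⟨hv1, hv2, hv3⟩ := hvF
  obtain ⟨hu1, hu2, hu3⟩ := huF
  have hn2 : ‖(q : ℚ_[2])‖ ≤ 1 := by
    rw [hvu2, sub_eq_add_neg]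
    calc ‖v.2.1 + -u.2.1‖ ≤ max ‖v.2.1‖ ‖-u.2.1‖ := Padic.nonarchimedean _ _
      _ ≤ 1 := by rw [norm_neg]; exact max_le hv2 hu2
  have hn3 : ‖(q : ℚ_[3])‖ ≤ 1 := by
    rw [hvu3, sub_eq_add_neg]
    calc ‖v.2.2 + -u.2.2‖ ≤ max ‖v.2.2‖ ‖-u.2.2‖ := Padic.nonarchimedean _ _
      _ ≤ 1 := by rw [norm_neg]; exact max_le hv3 hu3
  obtain ⟨n, hn⟩ := zInv6_int q hqmem hn2 hn3
  have hnR : |((n:ℚ) : ℝ)| < 1 := by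
    rw [← hn, hvu1, abs_lt]
    constructor <;> [nlinarith [hv1.1, hu1.2]; nlinarith [hv1.2, hu1.1]]
  have hn0 : n = 0 := by
    push_cast at hnR
    rwa [← Int.cast_abs, show ((1:ℝ) = ((1:ℤ):ℝ)) by norm_num, Int.cast_lt,
      Int.abs_lt_one_iff] at hnR
  have hq0' : q = 0 := by rw [hn, hn0]; norm_num
  have : v - u = 0 := by
    rw [hvu, hq0']
    simp [Δ]
  exact sub_eq_zero.mp this
end
end

section
/- Let a, b ≥ 1 be integers, N = 2^a·3^b, n ≥ 1, and i_0, i_1, …, i_n ∈ {0, …, N−1}. Set D = Σ_{j=0}^{n} i_j / N^{j+1}. Then the backward atom is a single rectangle: {x ∈ F : rep(N^j·x) ∈ A_{i_j} for all 0 ≤ j ≤ n} = [D, D + 1/N^{n+1}) × ℤ₂ × ℤ₃. -/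
open Set

noncomputable section

/-- The atom `A_k = [k/N, (k+1)/N) × ℤ₂ × ℤ₃` of the partition `ξ`. -/
def A (N k : ℕ) : Set G :=
  {x | x.1 ∈ Set.Ico ((k : ℝ) / N) (((k : ℝ) + 1) / N) ∧ ‖x.2.1‖ ≤ 1 ∧ ‖x.2.2‖ ≤ 1}

private lemma ico_scale {P : ℝ} (hP : 0 < P) (c e d x : ℝ) :
    P * (x - d) ∈ Set.Ico c e ↔ x ∈ Set.Ico (d + c / P) (d + e / P) := by
  simp only [Set.mem_Ico]
  constructor
  · rintro ⟨h1, h2⟩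
    have h1' : c / P ≤ x - d := (div_le_iff₀ hP).mpr (by linarith [mul_comm P (x - d)])
    have h2' : x - d < e / P := (lt_div_iff₀ hP).mpr (by linarith [mul_comm P (x - d)])
    constructor <;> linarith
  · rintro ⟨h1, h2⟩
    have h1' := (div_le_iff₀ hP).mp (by linarith : c / P ≤ x - d)
    have h2' := (lt_div_iff₀ hP).mp (by linarith : x - d < e / P)
    constructor <;> linarith [mul_comm P (x - d)]

private lemma sum_mul_int (N : ℕ) (hN : 0 < N) (n : ℕ) (i : ℕ → ℕ) :
    (N : ℝ) ^ (n + 1) * ∑ j ∈ Finset.range (n + 1), (i j : ℝ) / (N : ℝ) ^ (j + 1)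
      = ((∑ j ∈ Finset.range (n + 1), i j * N ^ (n - j) : ℕ) : ℝ) := by
  have hN0 : (N : ℝ) ≠ 0 := by positivity
  push_cast
  rw [Finset.mul_sum]
  refine Finset.sum_congr rfl fun j hj => ?_
  have hj' : j ≤ n := Nat.lt_succ_iff.mp (Finset.mem_range.mp hj)
  have hsplit : (N : ℝ) ^ (n + 1) = (N : ℝ) ^ (n - j) * (N : ℝ) ^ (j + 1) := by
    rw [← pow_add]; congr 1; omega
  rw [hsplit]
  field_simp

private lemma sum_le' (N : ℕ) (hN : 2 ≤ N) : ∀ (n : ℕ) (i : ℕ → ℕ), (∀ j ≤ n, i j < N) →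
    (∑ j ∈ Finset.range (n + 1), (i j : ℝ) / (N : ℝ) ^ (j + 1)) + 1 / (N : ℝ) ^ (n + 1) ≤ 1 := by
  have hN0 : (0 : ℝ) < N := Nat.cast_pos.mpr (by omega)
  intro n
  induction n with
  | zero =>
    intro i hi
    have h1 : (i 0 : ℝ) + 1 ≤ N := by exact_mod_cast hi 0 le_rfl
    simp only [Finset.sum_range_one, zero_add, pow_one]
    rw [← add_div, div_le_one hN0]
    exact h1
  | succ n IH =>
    intro i hi
    rw [Finset.sum_range_succ]
    have h1 := IH i (fun j hj => hi j (hj.trans (Nat.le_succ n)))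
    have h2 : (i (n + 1) : ℝ) + 1 ≤ N := by exact_mod_cast hi (n + 1) le_rfl
    have hp1 : (0 : ℝ) < (N : ℝ) ^ (n + 1) := by positivity
    have hp2 : (0 : ℝ) < (N : ℝ) ^ (n + 2) := by positivity
    have key : (i (n + 1) : ℝ) / (N : ℝ) ^ (n + 2) + 1 / (N : ℝ) ^ (n + 2)
        ≤ 1 / (N : ℝ) ^ (n + 1) := by
      rw [← add_div, div_le_div_iff₀ hp2 hp1]
      have hps : (N : ℝ) ^ (n + 2) = (N : ℝ) * (N : ℝ) ^ (n + 1) := by ring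
      nlinarith [hp1]
    linarith

private lemma fract_digits (N : ℕ) (hN : 2 ≤ N) :
    ∀ (n : ℕ) (i : ℕ → ℕ), (∀ j ≤ n, i j < N) → ∀ x : ℝ, x ∈ Set.Ico (0 : ℝ) 1 →
    ((∀ j ≤ n, Int.fract ((N : ℝ) ^ j * x) ∈ Set.Ico ((i j : ℝ) / N) (((i j : ℝ) + 1) / N)) ↔
      x ∈ Set.Ico (∑ j ∈ Finset.range (n + 1), (i j : ℝ) / (N : ℝ) ^ (j + 1))
        ((∑ j ∈ Finset.range (n + 1), (i j : ℝ) / (N : ℝ) ^ (j + 1)) + 1 / (N : ℝ) ^ (n + 1))) := by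
  have hN0 : (0 : ℝ) < N := Nat.cast_pos.mpr (by omega)
  intro n
  induction n with
  | zero =>
    intro i hi x hx
    have hfx : Int.fract ((N : ℝ) ^ 0 * x) = x := by
      rw [pow_zero, one_mul, Int.fract_eq_self.mpr ⟨hx.1, hx.2⟩]
    simp only [Finset.sum_range_one, zero_add, pow_one]
    constructor
    · intro h
      have h0 := h 0 le_rfl
      rw [hfx, mem_Ico] at h0
      rw [add_div] at h0
      exact ⟨h0.1, h0.2⟩
    · intro h j hj
      obtain rfl : j = 0 := Nat.le_zero.mp hj
      rw [hfx, mem_Ico, add_div]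
      exact ⟨h.1, by linarith [h.2]⟩
  | succ n IH =>
    intro i hi x hx
    set Dn := ∑ j ∈ Finset.range (n + 1), (i j : ℝ) / (N : ℝ) ^ (j + 1) with hDn
    have IH' := IH i (fun j hj => hi j (hj.trans (Nat.le_succ n))) x hx
    have hP : (0 : ℝ) < (N : ℝ) ^ (n + 1) := by positivity
    have key : x ∈ Set.Ico Dn (Dn + 1 / (N : ℝ) ^ (n + 1)) →
        Int.fract ((N : ℝ) ^ (n + 1) * x) = (N : ℝ) ^ (n + 1) * (x - Dn) := by
      rintro ⟨h1, h2⟩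
      obtain ⟨m, hm⟩ : ∃ m : ℤ, (N : ℝ) ^ (n + 1) * Dn = (m : ℝ) :=
        ⟨((∑ j ∈ Finset.range (n + 1), i j * N ^ (n - j) : ℕ) : ℤ), by
          rw [hDn, sum_mul_int N (by omega) n i]; push_cast; ring⟩
      have hPc : (N : ℝ) ^ (n + 1) * (1 / (N : ℝ) ^ (n + 1)) = 1 := by field_simp
      calc Int.fract ((N : ℝ) ^ (n + 1) * x)
          = Int.fract ((N : ℝ) ^ (n + 1) * x - (m : ℝ)) := (Int.fract_sub_intCast _ _).symm
        _ = (N : ℝ) ^ (n + 1) * x - (m : ℝ) := Int.fract_eq_self.mpr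
            ⟨by nlinarith, by nlinarith⟩
        _ = (N : ℝ) ^ (n + 1) * (x - Dn) := by rw [← hm]; ring
    have e1 : ((i (n + 1) : ℝ) / N) / (N : ℝ) ^ (n + 1) = (i (n + 1) : ℝ) / (N : ℝ) ^ (n + 2) := by
      rw [div_div, ← pow_succ']
    have e2 : (((i (n + 1) : ℝ) + 1) / N) / (N : ℝ) ^ (n + 1)
        = (i (n + 1) : ℝ) / (N : ℝ) ^ (n + 2) + 1 / (N : ℝ) ^ (n + 2) := by
      rw [div_div, ← pow_succ', add_div]
    rw [Finset.sum_range_succ, ← hDn]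
    constructor
    · intro h
      have hIn : x ∈ Set.Ico Dn (Dn + 1 / (N : ℝ) ^ (n + 1)) :=
        IH'.mp (fun j hj => h j (hj.trans (Nat.le_succ n)))
      have h2 := h (n + 1) le_rfl
      rw [key hIn] at h2
      have h3 := (ico_scale hP _ _ Dn x).mp h2
      rw [e1, e2] at h3
      exact ⟨h3.1, by have h4 := h3.2; rw [mem_Ico] at *; linarith [h3.2]⟩
    · intro h
      have hc2 : (i (n + 1) : ℝ) / (N : ℝ) ^ (n + 2) + 1 / (N : ℝ) ^ (n + 2)
          ≤ 1 / (N : ℝ) ^ (n + 1) := by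
        rw [← add_div, div_le_div_iff₀ (by positivity) hP]
        have hlt : (i (n + 1) : ℝ) + 1 ≤ N := by exact_mod_cast hi (n + 1) le_rfl
        have hps : (N : ℝ) ^ (n + 2) = (N : ℝ) * (N : ℝ) ^ (n + 1) := by ring
        nlinarith [hP]
      have hc1 : (0 : ℝ) ≤ (i (n + 1) : ℝ) / (N : ℝ) ^ (n + 2) := by positivity
      have hIn : x ∈ Set.Ico Dn (Dn + 1 / (N : ℝ) ^ (n + 1)) :=
        ⟨by linarith [h.1], by linarith [h.2]⟩
      intro j hj
      by_cases hj' : j ≤ n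
      · exact IH'.mpr hIn j hj'
      · obtain rfl : j = n + 1 := by omega
        rw [key hIn]
        apply (ico_scale hP _ _ Dn x).mpr
        rw [e1, e2]
        exact ⟨h.1, by linarith [h.2]⟩

private lemma not_dvd_den (p : ℕ) [hp : Fact p.Prime] (q : ℚ) (h : ‖(q : ℚ_[p])‖ ≤ 1) :
    ¬ p ∣ q.den := by
  intro hdvd
  have hnum : ¬ (p : ℤ) ∣ q.num := by
    intro hd
    have h1 : p ∣ q.num.natAbs := Int.ofNat_dvd_right.mp (Int.dvd_natAbs.mpr hd)
    have h2 : p ∣ Nat.gcd q.num.natAbs q.den := Nat.dvd_gcd h1 hdvd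
    rw [q.reduced] at h2
    exact hp.1.one_lt.ne' (Nat.eq_one_of_dvd_one h2)
  have hnorm_num : ‖(q.num : ℚ_[p])‖ = 1 := by
    rcases (Padic.norm_int_le_one (p := p) q.num).lt_or_eq with hlt | heq
    · exact absurd ((Padic.norm_intCast_lt_one_iff (k := q.num)).mp hlt) hnum
    · exact heq
  have hnorm_den : ‖((q.den : ℤ) : ℚ_[p])‖ < 1 :=
    (Padic.norm_intCast_lt_one_iff).mpr (Int.natCast_dvd_natCast.mpr hdvd)
  have hden0 : ((q.den : ℤ) : ℚ_[p]) ≠ 0 := by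
    exact_mod_cast (Int.natCast_ne_zero.mpr q.den_nz)
  have hq : (q : ℚ_[p]) = (q.num : ℚ_[p]) / ((q.den : ℤ) : ℚ_[p]) := by
    rw [Rat.cast_def]; push_cast; ring
  rw [hq, norm_div, hnorm_num] at h
  have hpos : 0 < ‖((q.den : ℤ) : ℚ_[p])‖ := norm_pos_iff.mpr hden0
  have := (div_le_one hpos).mp h
  linarith

private lemma int_of_norms (q : ℚ) (hq : q ∈ zInv6)
    (h2 : ‖(q : ℚ_[2])‖ ≤ 1) (h3 : ‖(q : ℚ_[3])‖ ≤ 1) : ∃ m : ℤ, q = (m : ℚ) := by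
  obtain ⟨z, k, hzk⟩ := hq
  have hden : q.den ∣ 6 ^ k := by
    have h := Rat.den_dvd z (6 ^ k)
    rw [Rat.divInt_eq_div] at h
    have he : q = (z : ℚ) / ((6 ^ k : ℤ) : ℚ) := by rw [hzk]; push_cast; ring
    rw [← he] at h
    exact_mod_cast h
  have h2' : ¬ 2 ∣ q.den := not_dvd_den 2 q h2
  have h3' : ¬ 3 ∣ q.den := not_dvd_den 3 q h3
  have cop2 : Nat.Coprime 2 q.den := (Nat.Prime.coprime_iff_not_dvd Nat.prime_two).mpr h2'
  have cop3 : Nat.Coprime 3 q.den := (Nat.Prime.coprime_iff_not_dvd Nat.prime_three).mpr h3'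
  have cop6 : Nat.Coprime 6 q.den := Nat.Coprime.mul cop2 cop3
  have cop6k : Nat.Coprime (6 ^ k) q.den := Nat.Coprime.pow_left k cop6
  have hone : q.den = 1 := Nat.Coprime.eq_one_of_dvd cop6k.symm hden
  exact ⟨q.num, by rw [← Rat.num_div_den q, hone]; simp⟩

private lemma rep_fract (rep : G → G) (hrep : ∀ x : G, rep x ∈ F ∧ x - rep x ∈ Γ)
    (N : ℕ) (x : G) (hx : x ∈ F) (j : ℕ) :
    (rep (act ((N : ℚ) ^ j) x)).1 = Int.fract ((N : ℝ) ^ j * x.1) := by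
  set y := act ((N : ℚ) ^ j) x with hy
  obtain ⟨hF, hΓ⟩ := hrep y
  obtain ⟨q, hq6, hqe⟩ := hΓ
  have hN2 : ‖(((N : ℚ) ^ j : ℚ) : ℚ_[2])‖ ≤ 1 := by
    push_cast
    rw [norm_pow]
    have : ‖((N : ℤ) : ℚ_[2])‖ ≤ 1 := Padic.norm_int_le_one _
    refine pow_le_one₀ (norm_nonneg _) ?_
    exact_mod_cast this
  have hN3 : ‖(((N : ℚ) ^ j : ℚ) : ℚ_[3])‖ ≤ 1 := by
    push_cast
    rw [norm_pow]
    have : ‖((N : ℤ) : ℚ_[3])‖ ≤ 1 := Padic.norm_int_le_one _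
    refine pow_le_one₀ (norm_nonneg _) ?_
    exact_mod_cast this
  have h2 : ‖(q : ℚ_[2])‖ ≤ 1 := by
    have heq : (q : ℚ_[2]) = y.2.1 - (rep y).2.1 := congrArg (fun z : G => z.2.1) hqe
    rw [heq]
    have hy2 : ‖y.2.1‖ ≤ 1 := by
      rw [hy]
      calc ‖(((N : ℚ) ^ j : ℚ) : ℚ_[2]) * x.2.1‖
          = ‖(((N : ℚ) ^ j : ℚ) : ℚ_[2])‖ * ‖x.2.1‖ := norm_mul _ _
        _ ≤ 1 * 1 := mul_le_mul hN2 hx.2.1 (norm_nonneg _) (by linarith [norm_nonneg (((N : ℚ) ^ j : ℚ) : ℚ_[2])])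
        _ = 1 := one_mul 1
    calc ‖y.2.1 - (rep y).2.1‖ = ‖y.2.1 + -(rep y).2.1‖ := by rw [sub_eq_add_neg]
      _ ≤ max ‖y.2.1‖ ‖-(rep y).2.1‖ := Padic.nonarchimedean _ _
      _ ≤ 1 := max_le hy2 (by rw [norm_neg]; exact hF.2.1)
  have h3 : ‖(q : ℚ_[3])‖ ≤ 1 := by
    have heq : (q : ℚ_[3]) = y.2.2 - (rep y).2.2 := congrArg (fun z : G => z.2.2) hqe
    rw [heq]
    have hy3 : ‖y.2.2‖ ≤ 1 := by
      rw [hy]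
      calc ‖(((N : ℚ) ^ j : ℚ) : ℚ_[3]) * x.2.2‖
          = ‖(((N : ℚ) ^ j : ℚ) : ℚ_[3])‖ * ‖x.2.2‖ := norm_mul _ _
        _ ≤ 1 * 1 := mul_le_mul hN3 hx.2.2 (norm_nonneg _) (by linarith [norm_nonneg (((N : ℚ) ^ j : ℚ) : ℚ_[3])])
        _ = 1 := one_mul 1
    calc ‖y.2.2 - (rep y).2.2‖ = ‖y.2.2 + -(rep y).2.2‖ := by rw [sub_eq_add_neg]
      _ ≤ max ‖y.2.2‖ ‖-(rep y).2.2‖ := Padic.nonarchimedean _ _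
      _ ≤ 1 := max_le hy3 (by rw [norm_neg]; exact hF.2.2)
  obtain ⟨m, hm⟩ := int_of_norms q hq6 h2 h3
  have h1 : (rep y).1 = y.1 - (m : ℝ) := by
    have heq : ((q : ℝ)) = y.1 - (rep y).1 := congrArg (fun z : G => z.1) hqe
    rw [hm] at heq
    push_cast at heq
    linarith
  have hy1 : y.1 = (N : ℝ) ^ j * x.1 := by
    rw [hy]
    show (((N : ℚ) ^ j : ℚ) : ℝ) * x.1 = _
    push_cast
    ring
  have hio : (N : ℝ) ^ j * x.1 - (m : ℝ) ∈ Set.Ico (0 : ℝ) 1 := by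
    rw [← hy1, ← h1]; exact hF.1
  rw [h1, hy1, ← Int.fract_sub_intCast ((N : ℝ) ^ j * x.1) m,
    Int.fract_eq_self.mpr ⟨hio.1, hio.2⟩]

/-- A backward atom `⋂_{j=0}^n α^{-j}(A_{i_j})` is a single rectangle
`[D, D+1/N^{n+1}) × ℤ₂ × ℤ₃` with `D = Σ_{j=0}^n i_j/N^{j+1}`. -/
theorem backward_atom (rep : G → G) (hrep : ∀ x : G, rep x ∈ F ∧ x - rep x ∈ Γ)
    (a b : ℕ) (ha : 1 ≤ a) (hb : 1 ≤ b) (N : ℕ) (hN : N = 2 ^ a * 3 ^ b)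
    (n : ℕ) (hn : 1 ≤ n) (i : ℕ → ℕ) (hi : ∀ j ≤ n, i j < N) :
    {x : G | x ∈ F ∧ ∀ j ≤ n, rep (act ((N : ℚ) ^ j) x) ∈ A N (i j)} =
      {x : G | x.1 ∈ Set.Ico (∑ j ∈ Finset.range (n + 1), (i j : ℝ) / (N : ℝ) ^ (j + 1))
          ((∑ j ∈ Finset.range (n + 1), (i j : ℝ) / (N : ℝ) ^ (j + 1)) + 1 / (N : ℝ) ^ (n + 1)) ∧
        ‖x.2.1‖ ≤ 1 ∧ ‖x.2.2‖ ≤ 1} := by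
  have hN2 : 2 ≤ N := by
    rw [hN]
    calc 2 = 2 ^ 1 := (pow_one 2).symm
      _ ≤ 2 ^ a := Nat.pow_le_pow_right (by norm_num) ha
      _ ≤ 2 ^ a * 3 ^ b := Nat.le_mul_of_pos_right _ (by positivity)
  ext x
  simp only [Set.mem_setOf_eq]
  constructor
  · rintro ⟨hxF, h⟩
    have hdig : ∀ j ≤ n, Int.fract ((N : ℝ) ^ j * x.1)
        ∈ Set.Ico ((i j : ℝ) / N) (((i j : ℝ) + 1) / N) := by
      intro j hj
      have hA := h j hj
      have hr := rep_fract rep hrep N x hxF j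
      rw [← hr]
      exact hA.1
    exact ⟨(fract_digits N hN2 n i hi x.1 hxF.1).mp hdig, hxF.2.1, hxF.2.2⟩
  · rintro ⟨hx1, hn2, hn3⟩
    have hD0 : 0 ≤ ∑ j ∈ Finset.range (n + 1), (i j : ℝ) / (N : ℝ) ^ (j + 1) := by positivity
    have hub := sum_le' N hN2 n i hi
    have hxF : x ∈ F := ⟨⟨le_trans hD0 hx1.1, lt_of_lt_of_le hx1.2 (by linarith)⟩, hn2, hn3⟩
    refine ⟨hxF, fun j hj => ?_⟩
    have hdig := (fract_digits N hN2 n i hi x.1 hxF.1).mpr hx1 j hj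
    have hr := rep_fract rep hrep N x hxF j
    have hFr := (hrep (act ((N : ℚ) ^ j) x)).1
    exact ⟨by rw [hr]; exact hdig, hFr.2.1, hFr.2.2⟩
end
end
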